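/- Let Y := ⨆_{n∈ℤ} Y_n, where Y_n is the space of half-infinite reduced words indexed from n, with measure μ_Y := Σ_{n∈ℤ} 3^{−n} μ_n (each μ_n the natural Markov probability measure). Then the left-multiplication action of F₂ on Y (formal left multiplication by g followed by cancellation, mapping Y_n into Y_{n−|g|'} for the appropriate index) is measure-preserving: each generator shift S_s preserves μ_Y. -/

import Mathlib

open MeasureTheory
/-- The four-letter alphabet `{a, b, a⁻¹, b⁻¹}`. -/
inductive Letter : Type
  | a | b | a' | b'
  deriving DecidableEq

instance : Fintype Letter := ⟨{.a, .b, .a', .b'}, fun x => by cases x <;> simp⟩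

instance : MeasurableSpace Letter := ⊤

/-- Formal inverse of a letter. -/
def Letter.inv : Letter → Letter
  | .a => .a' | .a' => .a | .b => .b' | .b' => .b

@[simp] theorem Letter.inv_inv (l : Letter) : l.inv.inv = l := by cases l <;> rfl

/-- The space of half-infinite reduced words: sequences of letters in which a letter is
never followed by its inverse. -/
def RWord : Type := {s : ℕ → Letter // ∀ m, s (m + 1) ≠ (s m).inv}

instance : MeasurableSpace RWord := by unfold RWord; infer_instance

/-- A measure on the space of half-infinite reduced words is a *Markov measure* if every
cylinder set given by a reduced word of length `k+1` has measure `1/(4·3^k)`: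
the first letter is uniform on the four letters and each subsequent letter is uniform
on the three letters not inverse to its predecessor. -/
def IsMarkovMeasure (μ : MeasureTheory.Measure RWord) : Prop :=
  MeasureTheory.IsProbabilityMeasure μ ∧
  ∀ (k : ℕ) (w : Fin (k + 1) → Letter),
    (∀ i : Fin k, w i.succ ≠ (w i.castSucc).inv) →
    μ {s : RWord | ∀ i : Fin (k + 1), s.1 i = w i} = ((4 * 3 ^ k : ℕ) : ENNReal)⁻¹

/-- Deletion of the first letter of a reduced word. -/
def tailWord (s : RWord) : RWord := ⟨fun m => s.1 (m + 1), fun m => s.2 (m + 1)⟩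

/-- Prepending a letter `s` to a reduced word `w` with `w₀ ≠ s⁻¹`. -/
def consWord (s : Letter) (w : RWord) (h : ¬ w.1 0 = s.inv) : RWord :=
  ⟨fun m => match m with | 0 => s | (m + 1) => w.1 m, by
    intro m
    match m with
    | 0 => exact h
    | (m + 1) => exact w.2 m⟩

/-- The model of `Y = ⨆_{n ∈ ℤ} Y_n`: a point of `Y_n` is a pair `(n, w)` where `w` is the
reduced word `s_n s_{n+1} …` reindexed from `0`. -/
abbrev YSpace : Type := ℤ × RWord

/-- The measure `μ_Y = Σ_{n ∈ ℤ} 3^{−n} μ_n` on `Y = ⨆_n Y_n`, where each `μ_n` is a copy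
of the Markov measure `μW`. -/
noncomputable def muY (μW : Measure RWord) : Measure YSpace :=
  Measure.sum fun n : ℤ => (3 : ENNReal) ^ (-n) • (Measure.map (Prod.mk n) μW)

/-- Formal left multiplication by a generator `s`: prepend `s` (moving `Y_n → Y_{n−1}`)
unless the first letter is `s⁻¹`, in which case delete it (moving `Y_n → Y_{n+1}`). -/
def shiftS (s : Letter) (p : YSpace) : YSpace :=
  if h : p.2.1 0 = s.inv then (p.1 + 1, tailWord p.2)
  else (p.1 - 1, consWord s p.2 h)

lemma measurable_coordRW (n : ℕ) : Measurable fun x : RWord => x.1 n :=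
  (measurable_pi_apply n).comp measurable_subtype_coe

def cylSet (n : ℕ) (w : Fin n → Letter) : Set RWord := {x | ∀ i : Fin n, x.1 i = w i}

lemma measurableSet_cylSet (n : ℕ) (w : Fin n → Letter) : MeasurableSet (cylSet n w) := by
  have h : cylSet n w = ⋂ i : Fin n, (fun x : RWord => x.1 (i : ℕ)) ⁻¹' {w i} := by
    ext x; simp [cylSet]
  rw [h]
  exact MeasurableSet.iInter fun i => measurable_coordRW i (by trivial)

def RW2 : Type := RWord

instance : MeasurableSpace RW2 :=
  MeasurableSpace.generateFrom {S | ∃ n w, S = cylSet n w}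

lemma generateFrom_cylSets :
    (inferInstance : MeasurableSpace RWord)
      = MeasurableSpace.generateFrom {S | ∃ n w, S = cylSet n w} := by
  apply le_antisymm
  · have hcoord : ∀ n : ℕ, Measurable (fun x : RW2 => (show RWord from x).1 n) := by
      intro n t ht
      have h : (fun x : RW2 => (show RWord from x).1 n) ⁻¹' t
          = ⋃ (w : Fin (n+1) → Letter) (_ : w (Fin.last n) ∈ t),
              (cylSet (n+1) w : Set RW2) := by
        ext x
        constructor
        · intro hx
          exact Set.mem_iUnion.2 ⟨fun i => (show RWord from x).1 i, Set.mem_iUnion.2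
            ⟨by simpa [Fin.val_last] using (hx : (show RWord from x).1 n ∈ t), fun i => rfl⟩⟩
        · intro hx
          obtain ⟨w, hx⟩ := Set.mem_iUnion.1 hx
          obtain ⟨hw, hxw⟩ := Set.mem_iUnion.1 hx
          have h2 : (show RWord from x).1 (Fin.last n) = w (Fin.last n) := hxw (Fin.last n)
          rw [Fin.val_last] at h2
          show (show RWord from x).1 n ∈ t
          rw [h2]; exact hw
      rw [h]
      exact MeasurableSet.iUnion fun w => MeasurableSet.iUnion fun hw =>
        MeasurableSpace.measurableSet_generateFrom ⟨n+1, w, rfl⟩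
    have hval : Measurable (fun x : RW2 => ((show RWord from x).1 : ℕ → Letter)) :=
      measurable_pi_iff.mpr hcoord
    exact measurable_iff_comap_le.mp hval
  · exact MeasurableSpace.generateFrom_le
      (by rintro S ⟨n, w, rfl⟩; exact measurableSet_cylSet n w)

lemma isPiSystem_cylSets : IsPiSystem {S : Set RWord | ∃ n w, S = cylSet n w} := by
  have key : ∀ (n m : ℕ) (w : Fin n → Letter) (v : Fin m → Letter), n ≤ m →
      (cylSet n w ∩ cylSet m v).Nonempty → cylSet n w ∩ cylSet m v = cylSet m v := by
    intro n m w v h ⟨x, hx1, hx2⟩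
    apply Set.inter_eq_self_of_subset_right
    intro y hy i
    have hi : (i : ℕ) < m := lt_of_lt_of_le i.2 h
    have h2 : v ⟨i, hi⟩ = w i := by
      have := hx2 ⟨i, hi⟩
      rw [← this]; exact hx1 i
    calc y.1 i = v ⟨i, hi⟩ := hy ⟨i, hi⟩
    _ = w i := h2
  rintro S ⟨n, w, rfl⟩ T ⟨m, v, rfl⟩ hne
  rcases le_total n m with h | h
  · rw [key n m w v h hne]; exact ⟨m, v, rfl⟩
  · rw [Set.inter_comm] at hne ⊢
    rw [key m n v w h hne]; exact ⟨n, w, rfl⟩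

lemma cylSet_zero (w : Fin 0 → Letter) : cylSet 0 w = Set.univ := by
  ext x; simp [cylSet]

lemma extRW (μ ν : Measure RWord) [IsFiniteMeasure μ]
    (h : ∀ (n : ℕ) (w : Fin n → Letter), μ (cylSet n w) = ν (cylSet n w)) : μ = ν := by
  refine ext_of_generate_finite _ generateFrom_cylSets isPiSystem_cylSets ?_ ?_
  · rintro S ⟨n, w, rfl⟩; exact h n w
  · rw [← cylSet_zero (fun i => i.elim0)]; exact h 0 _

/-- Reducedness of a finite word. -/
def Red {k : ℕ} (w : Fin (k+1) → Letter) : Prop :=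
  ∀ i : Fin k, w i.succ ≠ (w i.castSucc).inv

lemma red_cons {m : ℕ} (l : Letter) (w : Fin (m+1) → Letter) :
    Red (Fin.cons l w : Fin (m+1+1) → Letter) ↔ w 0 ≠ l.inv ∧ Red w := by
  constructor
  · intro h
    refine ⟨?_, fun j => ?_⟩
    · have := h 0
      rwa [Fin.cons_succ, Fin.castSucc_zero, Fin.cons_zero] at this
    · have := h j.succ
      rwa [Fin.cons_succ, ← Fin.succ_castSucc, Fin.cons_succ] at this
  · rintro ⟨h0, hr⟩ i
    refine Fin.cases ?_ (fun j => ?_) i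
    · rw [Fin.cons_succ, Fin.castSucc_zero, Fin.cons_zero]; exact h0
    · rw [Fin.cons_succ, ← Fin.succ_castSucc, Fin.cons_succ]
      exact hr j

section Markov

variable {μW : Measure RWord}

lemma meas_cyl_red (hμW : IsMarkovMeasure μW) {k : ℕ} {w : Fin (k+1) → Letter}
    (h : Red w) : μW (cylSet (k+1) w) = ((4 * 3 ^ k : ℕ) : ENNReal)⁻¹ :=
  hμW.2 k w h

lemma meas_cyl_notred (hμW : IsMarkovMeasure μW) {k : ℕ} {w : Fin (k+1) → Letter}
    (h : ¬ Red w) : μW (cylSet (k+1) w) = 0 := by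
  have he : cylSet (k+1) w = ∅ := by
    rw [Red] at h; push_neg at h
    obtain ⟨i, hi⟩ := h
    ext x
    simp only [cylSet, Set.mem_setOf_eq, Set.mem_empty_iff_false, iff_false]
    intro hx
    have h1 := hx i.succ
    have h2 := hx i.castSucc
    rw [Fin.val_succ] at h1
    rw [Fin.coe_castSucc] at h2
    exact x.2 i (by rw [h1, h2, hi])
  rw [he]; exact measure_empty

/-- The set of words with first letter `l`. -/
def Fset (l : Letter) : Set RWord := {x | x.1 0 = l}

lemma measurableSet_Fset (l : Letter) : MeasurableSet (Fset l) :=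
  measurable_coordRW 0 (show MeasurableSet ({l} : Set Letter) by trivial)

lemma meas_Fset (hμW : IsMarkovMeasure μW) (l : Letter) :
    μW (Fset l) = (4 : ENNReal)⁻¹ := by
  have h : Fset l = cylSet 1 (fun _ => l) := by
    ext x; simp [Fset, cylSet, Fin.forall_fin_one]
  rw [h, meas_cyl_red hμW (fun i => i.elim0)]
  norm_num

lemma meas_Fset_compl (hμW : IsMarkovMeasure μW) (l : Letter) :
    μW (Fset l)ᶜ = 3 * (4 : ENNReal)⁻¹ := by
  haveI := hμW.1
  rw [measure_compl (measurableSet_Fset l) (measure_ne_top _ _), meas_Fset hμW l,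
    measure_univ]
  refine ENNReal.sub_eq_of_eq_add (by norm_num) ?_
  rw [← ENNReal.mul_inv_cancel (by norm_num : (4 : ENNReal) ≠ 0) (by norm_num)]
  ring

lemma inv_succ_pow (m : ℕ) :
    ((4 * 3 ^ (m+1) : ℕ) : ENNReal)⁻¹ = 3⁻¹ * ((4 * 3 ^ m : ℕ) : ENNReal)⁻¹ := by
  rw [← ENNReal.mul_inv (Or.inl (by norm_num)) (Or.inl (by norm_num))]
  congr 1
  push_cast
  ring

end Markov

lemma measurable_tailWord : Measurable tailWord := by
  apply Measurable.subtype_mk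
  exact measurable_pi_lambda _ fun m => measurable_coordRW (m + 1)

/-- Prepending, at the level of raw sequences. -/
def consF (s : Letter) (x : ℕ → Letter) : ℕ → Letter :=
  fun m => Nat.casesOn m s fun k => x k

/-- Total version of `consWord`. -/
def consFun (s : Letter) (w : RWord) : RWord :=
  ⟨if w.1 0 = s.inv then w.1 else consF s w.1, by
    by_cases h : w.1 0 = s.inv
    · simp only [if_pos h]; exact w.2
    · simp only [if_neg h]
      intro m
      cases m with
      | zero => exact h
      | succ k => exact w.2 k⟩

lemma consFun_eq {s : Letter} {w : RWord} (h : ¬ w.1 0 = s.inv) :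
    consFun s w = consWord s w h := by
  apply Subtype.ext
  show (if w.1 0 = s.inv then w.1 else consF s w.1) = _
  rw [if_neg h]
  funext m; cases m <;> rfl

lemma consFun_fst {s : Letter} {w : RWord} (h : ¬ w.1 0 = s.inv) :
    (consFun s w).1 = consF s w.1 := by
  show (if w.1 0 = s.inv then w.1 else consF s w.1) = _
  rw [if_neg h]

lemma measurable_consFun (s : Letter) : Measurable (consFun s) := by
  apply Measurable.subtype_mk
  have hset : MeasurableSet {w : RWord | w.1 0 = s.inv} :=
    measurable_coordRW 0 (show MeasurableSet ({s.inv} : Set Letter) by trivial)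
  apply Measurable.ite hset measurable_subtype_coe
  refine measurable_pi_lambda _ fun m => ?_
  cases m with
  | zero => exact measurable_const
  | succ k => exact measurable_coordRW k

lemma shiftS_pos {s : Letter} {p : YSpace} (h : p.2.1 0 = s.inv) :
    shiftS s p = (p.1 + 1, tailWord p.2) := dif_pos h

lemma shiftS_neg {s : Letter} {p : YSpace} (h : ¬ p.2.1 0 = s.inv) :
    shiftS s p = (p.1 - 1, consWord s p.2 h) := dif_neg h

lemma shiftS_eq (s : Letter) : shiftS s = fun p : YSpace =>
    if p.2.1 0 = s.inv then (p.1 + 1, tailWord p.2) else (p.1 - 1, consFun s p.2) := by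
  funext p
  by_cases h : p.2.1 0 = s.inv
  · rw [shiftS_pos h, if_pos h]
  · rw [shiftS_neg h, if_neg h, consFun_eq h]

lemma measurable_shiftS (s : Letter) : Measurable (shiftS s) := by
  rw [shiftS_eq]
  have hset : MeasurableSet {p : YSpace | p.2.1 0 = s.inv} :=
    ((measurable_coordRW 0).comp measurable_snd)
      (show MeasurableSet ({s.inv} : Set Letter) by trivial)
  have hadd : Measurable fun x : YSpace => x.1 + 1 :=
    (measurable_from_top (f := fun n : ℤ => n + 1)).comp measurable_fst
  have hsub : Measurable fun x : YSpace => x.1 - 1 :=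
    (measurable_from_top (f := fun n : ℤ => n - 1)).comp measurable_fst
  apply Measurable.ite hset
  · exact hadd.prodMk (measurable_tailWord.comp measurable_snd)
  · exact hsub.prodMk ((measurable_consFun s).comp measurable_snd)

lemma tail_pre_cyl (s : Letter) (n : ℕ) (w : Fin n → Letter) :
    tailWord ⁻¹' cylSet n w ∩ Fset (Letter.inv s) = cylSet (n+1) (Fin.cons s.inv w) := by
  ext x
  simp only [Set.mem_inter_iff, Set.mem_preimage, cylSet, Set.mem_setOf_eq, Fset]
  constructor
  · rintro ⟨h1, h2⟩ i
    refine Fin.cases ?_ (fun j => ?_) i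
    · simpa using h2
    · have := h1 j
      simpa [Fin.val_succ, tailWord] using this
  · intro h
    constructor
    · intro i
      have := h i.succ
      simpa [Fin.val_succ, tailWord] using this
    · simpa using h 0

lemma map_tail_restrict {μW : Measure RWord} (hμW : IsMarkovMeasure μW) (s : Letter) :
    Measure.map tailWord (μW.restrict (Fset s.inv)) = (3 : ENNReal)⁻¹ • μW.restrict (Fset s)ᶜ := by
  haveI := hμW.1
  haveI : IsFiniteMeasure (Measure.map tailWord (μW.restrict (Fset s.inv))) := by
    constructor
    rw [Measure.map_apply measurable_tailWord MeasurableSet.univ]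
    exact measure_lt_top _ _
  refine extRW _ _ fun n w => ?_
  rw [Measure.map_apply measurable_tailWord (measurableSet_cylSet n w),
    Measure.restrict_apply (measurable_tailWord (measurableSet_cylSet n w)),
    Measure.smul_apply, smul_eq_mul,
    Measure.restrict_apply (measurableSet_cylSet n w),
    tail_pre_cyl s n w]
  cases n with
  | zero =>
    have h1 : cylSet 0 w ∩ (Fset s)ᶜ = (Fset s)ᶜ := by
      rw [cylSet_zero, Set.univ_inter]
    rw [h1, meas_Fset_compl hμW s, meas_cyl_red hμW (fun i => i.elim0),
      ← mul_assoc, ENNReal.inv_mul_cancel (by norm_num) (by norm_num), one_mul]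
    norm_num
  | succ m =>
    by_cases h0 : w 0 = s
    · have h1 : cylSet (m+1) w ∩ (Fset s)ᶜ = ∅ := by
        ext x
        simp only [Set.mem_inter_iff, cylSet, Set.mem_setOf_eq, Set.mem_compl_iff,
          Fset, Set.mem_empty_iff_false, iff_false, not_and]
        intro hx hc
        exact hc (by simpa [h0] using hx 0)
      have h2 : ¬ Red (Fin.cons s.inv w : Fin (m+1+1) → Letter) := by
        rw [red_cons]
        rintro ⟨ha, -⟩
        exact ha (by rw [h0, Letter.inv_inv])
      rw [meas_cyl_notred hμW h2, h1, measure_empty, mul_zero]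
    · have h1 : cylSet (m+1) w ∩ (Fset s)ᶜ = cylSet (m+1) w := by
        apply Set.inter_eq_self_of_subset_left
        intro x hx
        simp only [Set.mem_compl_iff, Fset, Set.mem_setOf_eq]
        intro hc
        exact h0 (by rw [← hc]; exact (hx 0).symm)
      rw [h1]
      by_cases hr : Red w
      · rw [meas_cyl_red hμW hr,
          meas_cyl_red hμW ((red_cons _ _).mpr ⟨by rwa [Letter.inv_inv], hr⟩),
          inv_succ_pow]
      · rw [meas_cyl_notred hμW hr,
          meas_cyl_notred hμW (fun hc => hr ((red_cons _ _).mp hc).2), mul_zero]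

lemma cons_pre_cyl (s : Letter) (m : ℕ) (w : Fin (m+1) → Letter) (h0 : w 0 = s) :
    consFun s ⁻¹' cylSet (m+1) w ∩ (Fset (Letter.inv s))ᶜ
      = cylSet m (Fin.tail w) ∩ (Fset (Letter.inv s))ᶜ := by
  ext x
  simp only [Set.mem_inter_iff, Set.mem_preimage, cylSet, Set.mem_setOf_eq,
    Set.mem_compl_iff, Fset]
  constructor
  · rintro ⟨h1, h2⟩
    refine ⟨fun j => ?_, h2⟩
    have := h1 j.succ
    rw [consFun_fst h2] at this
    rw [Fin.val_succ] at this
    exact this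
  · rintro ⟨h1, h2⟩
    refine ⟨fun i => ?_, h2⟩
    rw [consFun_fst h2]
    refine Fin.cases ?_ (fun j => ?_) i
    · show s = w 0
      exact h0.symm
    · rw [Fin.val_succ]
      show x.1 j = w j.succ
      exact h1 j

lemma cons_pre_cyl_empty (s : Letter) (m : ℕ) (w : Fin (m+1) → Letter) (h0 : ¬ w 0 = s) :
    consFun s ⁻¹' cylSet (m+1) w ∩ (Fset (Letter.inv s))ᶜ = ∅ := by
  ext x
  simp only [Set.mem_inter_iff, Set.mem_preimage, cylSet, Set.mem_setOf_eq,
    Set.mem_compl_iff, Fset, Set.mem_empty_iff_false, iff_false, not_and]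
  intro h1 h2
  have := h1 0
  rw [consFun_fst h2] at this
  exact h0 ((show consF s x.1 ((0 : Fin (m+1)) : ℕ) = s from rfl) ▸ this ▸ rfl)

lemma map_cons_restrict {μW : Measure RWord} (hμW : IsMarkovMeasure μW) (s : Letter) :
    Measure.map (consFun s) (μW.restrict (Fset s.inv)ᶜ)
      = (3 : ENNReal) • μW.restrict (Fset s) := by
  haveI := hμW.1
  haveI : IsFiniteMeasure (Measure.map (consFun s) (μW.restrict (Fset s.inv)ᶜ)) := by
    constructor
    rw [Measure.map_apply (measurable_consFun s) MeasurableSet.univ]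
    exact measure_lt_top _ _
  refine extRW _ _ fun n w => ?_
  rw [Measure.map_apply (measurable_consFun s) (measurableSet_cylSet n w),
    Measure.restrict_apply (measurable_consFun s (measurableSet_cylSet n w)),
    Measure.smul_apply, smul_eq_mul,
    Measure.restrict_apply (measurableSet_cylSet n w)]
  cases n with
  | zero =>
    rw [cylSet_zero, Set.preimage_univ, Set.univ_inter, Set.univ_inter,
      meas_Fset_compl hμW s.inv, meas_Fset hμW s]
  | succ m =>
    by_cases h0 : w 0 = s
    · have h1 : cylSet (m+1) w ∩ Fset s = cylSet (m+1) w := by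
        apply Set.inter_eq_self_of_subset_left
        intro x hx
        show x.1 0 = s
        rw [← h0]
        exact hx 0
      rw [cons_pre_cyl s m w h0, h1]
      cases m with
      | zero =>
        have h2 : cylSet 0 (Fin.tail w) ∩ (Fset (Letter.inv s))ᶜ = (Fset s.inv)ᶜ := by
          rw [cylSet_zero, Set.univ_inter]
        rw [h2, meas_Fset_compl hμW s.inv, meas_cyl_red hμW (fun i => i.elim0)]
        norm_num
      | succ j =>
        by_cases h2 : w (Fin.succ 0) = s.inv
        · have h3 : cylSet (j+1) (Fin.tail w) ∩ (Fset (Letter.inv s))ᶜ = ∅ := by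
            ext x
            simp only [Set.mem_inter_iff, cylSet, Set.mem_setOf_eq, Set.mem_compl_iff,
              Fset, Set.mem_empty_iff_false, iff_false, not_and, not_not]
            intro hx
            have := hx 0
            rw [show ((0 : Fin (j+1)) : ℕ) = 0 from rfl] at this
            rw [this]
            show Fin.tail w 0 = s.inv
            rw [Fin.tail]
            exact h2
          have h4 : ¬ Red w := by
            intro hr
            have := hr 0
            rw [Fin.castSucc_zero] at this
            exact this (by rw [h2, h0])
          rw [h3, measure_empty, meas_cyl_notred hμW h4, mul_zero]
        · have h3 : cylSet (j+1) (Fin.tail w) ∩ (Fset (Letter.inv s))ᶜ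
              = cylSet (j+1) (Fin.tail w) := by
            apply Set.inter_eq_self_of_subset_left
            intro x hx
            simp only [Set.mem_compl_iff, Fset, Set.mem_setOf_eq]
            intro hc
            apply h2
            have := hx 0
            rw [show ((0 : Fin (j+1)) : ℕ) = 0 from rfl] at this
            show Fin.tail w 0 = s.inv
            rw [← this]
            exact hc
          rw [h3]
          have hred : Red w ↔ Red (Fin.tail w) := by
            conv_lhs => rw [← Fin.cons_self_tail w, red_cons]
            constructor
            · exact fun h => h.2
            · intro h
              refine ⟨?_, h⟩
              show Fin.tail w 0 ≠ (w 0).inv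
              rw [Fin.tail, h0]
              exact h2
          by_cases hr : Red (Fin.tail w)
          · rw [meas_cyl_red hμW hr, meas_cyl_red hμW (hred.mpr hr), inv_succ_pow,
              ← mul_assoc, ENNReal.mul_inv_cancel (by norm_num) (by norm_num), one_mul]
          · rw [meas_cyl_notred hμW hr, meas_cyl_notred hμW (fun h => hr (hred.mp h)),
              mul_zero]
    · rw [cons_pre_cyl_empty s m w h0, measure_empty]
      have h1 : cylSet (m+1) w ∩ Fset s = ∅ := by
        ext x
        simp only [Set.mem_inter_iff, cylSet, Set.mem_setOf_eq, Fset,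
          Set.mem_empty_iff_false, iff_false, not_and]
        intro hx hc
        exact h0 (by rw [← hx 0]; exact hc)
      rw [h1, measure_empty, mul_zero]

lemma key_map {μW : Measure RWord} (hμW : IsMarkovMeasure μW) (s : Letter) (n : ℤ) :
    Measure.map (shiftS s) (Measure.map (Prod.mk n) μW)
      = (3 : ENNReal)⁻¹ • Measure.map (Prod.mk (n+1)) (μW.restrict (Fset s)ᶜ)
        + (3 : ENNReal) • Measure.map (Prod.mk (n-1)) (μW.restrict (Fset s)) := by
  rw [Measure.map_map (measurable_shiftS s) measurable_prodMk_left]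
  have hsplit : Measure.map (shiftS s ∘ Prod.mk n) μW
      = Measure.map (shiftS s ∘ Prod.mk n) (μW.restrict (Fset s.inv))
        + Measure.map (shiftS s ∘ Prod.mk n) (μW.restrict (Fset s.inv)ᶜ) := by
    conv_lhs => rw [← Measure.restrict_add_restrict_compl
      (μ := μW) (measurableSet_Fset s.inv)]
    exact Measure.map_add _ _ ((measurable_shiftS s).comp measurable_prodMk_left)
  rw [hsplit]
  congr 1
  · have he : (shiftS s ∘ Prod.mk n) =ᵐ[μW.restrict (Fset s.inv)]
        (Prod.mk (n+1) ∘ tailWord) := by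
      filter_upwards [self_mem_ae_restrict (measurableSet_Fset s.inv)] with x hx
      show shiftS s (n, x) = (n + 1, tailWord x)
      exact shiftS_pos hx
    rw [Measure.map_congr he,
      ← Measure.map_map measurable_prodMk_left measurable_tailWord,
      map_tail_restrict hμW s, Measure.map_smul]
  · have he : (shiftS s ∘ Prod.mk n) =ᵐ[μW.restrict (Fset s.inv)ᶜ]
        (Prod.mk (n-1) ∘ consFun s) := by
      filter_upwards [self_mem_ae_restrict (measurableSet_Fset s.inv).compl] with x hx
      show shiftS s (n, x) = (n - 1, consFun s x)
      have hx' : ¬ x.1 0 = s.inv := hx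
      rw [shiftS_neg hx', consFun_eq hx']
    rw [Measure.map_congr he,
      ← Measure.map_map measurable_prodMk_left (measurable_consFun s),
      map_cons_restrict hμW s, Measure.map_smul]

lemma pow_shift1 (n : ℤ) : (3 : ENNReal) ^ (-(n+1)) = 3 ^ (-n) * 3⁻¹ := by
  rw [neg_add, ENNReal.zpow_add (by norm_num) (by norm_num)]
  congr 1
  rw [zpow_neg_one]

lemma pow_shift2 (n : ℤ) : (3 : ENNReal) ^ (-(n-1)) = 3 ^ (-n) * 3 := by
  have h : -(n-1) = -n + 1 := by ring
  rw [h, ENNReal.zpow_add (by norm_num) (by norm_num), zpow_one]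

lemma shiftS_leftInverse (t : Letter) :
    Function.LeftInverse (shiftS t.inv) (shiftS t) := by
  rintro ⟨n, x⟩
  by_cases h : x.1 0 = t.inv
  · rw [shiftS_pos (p := (n, x)) h]
    have h2 : ¬ (tailWord x).1 0 = t.inv.inv := by
      show ¬ x.1 1 = t.inv.inv
      rw [← h]
      exact x.2 0
    rw [shiftS_neg (p := (n + 1, tailWord x)) h2]
    refine Prod.ext ?_ ?_
    · show n + 1 - 1 = n
      ring
    · show consWord t.inv (tailWord x) h2 = x
      apply Subtype.ext
      funext m
      cases m with
      | zero => exact h.symm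
      | succ k => rfl
  · rw [shiftS_neg (p := (n, x)) h]
    have h2 : (consWord t x h).1 0 = t.inv.inv := by
      rw [Letter.inv_inv]
      rfl
    rw [shiftS_pos (p := (n - 1, consWord t x h)) h2]
    refine Prod.ext ?_ ?_
    · show n - 1 + 1 = n
      ring
    · show tailWord (consWord t x h) = x
      apply Subtype.ext
      funext m
      rfl

lemma shiftS_bijective (s : Letter) : Function.Bijective (shiftS s) := by
  refine Function.bijective_iff_has_inverse.mpr ⟨shiftS s.inv, shiftS_leftInverse s, ?_⟩
  have h := shiftS_leftInverse s.inv
  rwa [Letter.inv_inv] at h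


/-- The left-multiplication action of `F₂` on `Y = ⨆_{n∈ℤ} Y_n` with the measure
`μ_Y = Σ_n 3^{−n} μ_n` is measure-preserving: each generator shift `S_s` is an invertible
measure-preserving bijection of `Y`. -/
theorem shiftS_measurePreserving (μW : Measure RWord) (hμW : IsMarkovMeasure μW)
    (s : Letter) :
    MeasurePreserving (shiftS s) (muY μW) (muY μW) ∧
    Function.Bijective (shiftS s) := by
  haveI := hμW.1
  refine ⟨⟨measurable_shiftS s, ?_⟩, shiftS_bijective s⟩
  ext A hA
  rw [Measure.map_apply (measurable_shiftS s) hA]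
  have hA' : MeasurableSet (shiftS s ⁻¹' A) := measurable_shiftS s hA
  rw [muY, Measure.sum_apply _ hA', Measure.sum_apply _ hA]
  have hterm : ∀ n : ℤ,
      ((3 : ENNReal) ^ (-n) • Measure.map (Prod.mk n) μW) (shiftS s ⁻¹' A)
        = (3 : ENNReal) ^ (-(n+1)) * Measure.map (Prod.mk (n+1)) (μW.restrict (Fset s)ᶜ) A
          + (3 : ENNReal) ^ (-(n-1))
              * Measure.map (Prod.mk (n-1)) (μW.restrict (Fset s)) A := by
    intro n
    rw [Measure.smul_apply, smul_eq_mul,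
      ← Measure.map_apply (measurable_shiftS s) hA, key_map hμW s n,
      Measure.add_apply, Measure.smul_apply, Measure.smul_apply, smul_eq_mul,
      smul_eq_mul, mul_add, ← mul_assoc, ← mul_assoc, ← pow_shift1, ← pow_shift2]
  calc ∑' n : ℤ, ((3 : ENNReal) ^ (-n) • Measure.map (Prod.mk n) μW) (shiftS s ⁻¹' A)
      = ∑' n : ℤ,
        ((3 : ENNReal) ^ (-(n+1)) * Measure.map (Prod.mk (n+1)) (μW.restrict (Fset s)ᶜ) A
          + (3 : ENNReal) ^ (-(n-1))
              * Measure.map (Prod.mk (n-1)) (μW.restrict (Fset s)) A) := tsum_congr hterm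
    _ = (∑' n : ℤ, (3 : ENNReal) ^ (-(n+1))
            * Measure.map (Prod.mk (n+1)) (μW.restrict (Fset s)ᶜ) A)
        + ∑' n : ℤ, (3 : ENNReal) ^ (-(n-1))
            * Measure.map (Prod.mk (n-1)) (μW.restrict (Fset s)) A := ENNReal.tsum_add
    _ = (∑' n : ℤ, (3 : ENNReal) ^ (-n)
            * Measure.map (Prod.mk n) (μW.restrict (Fset s)ᶜ) A)
        + ∑' n : ℤ, (3 : ENNReal) ^ (-n)
            * Measure.map (Prod.mk n) (μW.restrict (Fset s)) A := by
        congr 1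
        · have := (Equiv.addRight (1 : ℤ)).tsum_eq
            (fun m => (3 : ENNReal) ^ (-m) * Measure.map (Prod.mk m) (μW.restrict (Fset s)ᶜ) A)
          simpa using this
        · have := (Equiv.subRight (1 : ℤ)).tsum_eq
            (fun m => (3 : ENNReal) ^ (-m) * Measure.map (Prod.mk m) (μW.restrict (Fset s)) A)
          simpa using this
    _ = ∑' n : ℤ, ((3 : ENNReal) ^ (-n) * Measure.map (Prod.mk n) (μW.restrict (Fset s)ᶜ) A
          + (3 : ENNReal) ^ (-n) * Measure.map (Prod.mk n) (μW.restrict (Fset s)) A) :=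
        ENNReal.tsum_add.symm
    _ = ∑' n : ℤ, ((3 : ENNReal) ^ (-n) • Measure.map (Prod.mk n) μW) A := by
        refine tsum_congr fun m => ?_
        rw [Measure.smul_apply, smul_eq_mul, ← mul_add]
        congr 1
        rw [Measure.map_apply measurable_prodMk_left hA,
          Measure.map_apply measurable_prodMk_left hA,
          Measure.map_apply measurable_prodMk_left hA,
          ← Measure.add_apply, Measure.restrict_compl_add_restrict (measurableSet_Fset s)]
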